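/- For any two probability distributions P and Q on a finite alphabet X and any α ≥ 0, the Rényi divergence of order α/(1+α) satisfies the variational formula D_{α/(1+α)}(P‖Q) = min over probability distributions V on X of (α·D(V‖P) + D(V‖Q)). -/

import Mathlib

open Real Finset Filter

open scoped Classical

variable {X : Type*}

def IsProb [Fintype X] (P : X → ℝ) : Prop := (∀ x, 0 ≤ P x) ∧ ∑ x, P x = 1

noncomputable def KL [Fintype X] (P Q : X → ℝ) : ℝ := ∑ x, P x * Real.log (P x / Q x)

noncomputable def GJS [Fintype X] (P Q : X → ℝ) (α : ℝ) : ℝ :=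
  α * KL P (fun x => (α * P x + Q x) / (1 + α)) + KL Q (fun x => (α * P x + Q x) / (1 + α))

noncomputable def Renyi [Fintype X] (β : ℝ) (P Q : X → ℝ) : ℝ :=
  (1 / (β - 1)) * Real.log (∑ x, P x ^ β * Q x ^ (1 - β))

noncomputable def scoreG [Fintype X] {M : ℕ} (Q : Fin M → X → ℝ) (i : Fin M) : ℝ :=
  ∑ j ∈ Finset.univ.erase i,
    KL (Q j) (fun x => (∑ l ∈ Finset.univ.erase i, Q l x) / ((M : ℝ) - 1))

theorem renyi_variational [Fintype X] (P Q : X → ℝ) (hP : IsProb P) (hQ : IsProb Q)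
    (hPpos : ∀ x, 0 < P x) (hQpos : ∀ x, 0 < Q x) (α : ℝ) (hα : 0 ≤ α) :
    IsLeast {v : ℝ | ∃ V : X → ℝ, IsProb V ∧ v = α * KL V P + KL V Q}
      (Renyi (α / (1 + α)) P Q) := by
  have h1α : (0:ℝ) < 1 + α := by linarith
  set β : ℝ := α / (1 + α) with hβdef
  set Z : ℝ := ∑ x, P x ^ β * Q x ^ (1 - β) with hZdef
  have hterm : ∀ x : X, 0 < P x ^ β * Q x ^ (1 - β) := fun x =>
    mul_pos (Real.rpow_pos_of_pos (hPpos x) _) (Real.rpow_pos_of_pos (hQpos x) _)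
  have huniv : (Finset.univ : Finset X).Nonempty := by
    rcases (Finset.univ : Finset X).eq_empty_or_nonempty with h | h
    · exfalso; have := hP.2; rw [h, Finset.sum_empty] at this; norm_num at this
    · exact h
  have hZpos : 0 < Z := Finset.sum_pos (fun x _ => hterm x) huniv
  set W : X → ℝ := fun x => (P x ^ β * Q x ^ (1 - β)) / Z with hWdef
  have hWpos : ∀ x, 0 < W x := fun x => div_pos (hterm x) hZpos
  have hWsum : ∑ x, W x = 1 := by
    rw [hWdef]; rw [← Finset.sum_div]; exact div_self hZpos.ne'
  have hb1 : (1 + α) * β = α := by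
    rw [hβdef]; field_simp
  have hb2 : (1 + α) * (1 - β) = 1 := by nlinarith [hb1]
  have hlogW : ∀ x, Real.log (W x) =
      β * Real.log (P x) + (1 - β) * Real.log (Q x) - Real.log Z := by
    intro x
    rw [hWdef]
    rw [Real.log_div (hterm x).ne' hZpos.ne',
      Real.log_mul (Real.rpow_pos_of_pos (hPpos x) _).ne'
        (Real.rpow_pos_of_pos (hQpos x) _).ne',
      Real.log_rpow (hPpos x), Real.log_rpow (hQpos x)]
  -- key identity
  have key : ∀ V : X → ℝ, IsProb V →
      α * KL V P + KL V Q =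
        (1 + α) * (∑ x, V x * Real.log (V x / W x)) - (1 + α) * Real.log Z := by
    intro V hV
    have : α * KL V P + KL V Q =
        ∑ x, (α * (V x * Real.log (V x / P x)) + V x * Real.log (V x / Q x)) := by
      rw [KL, KL, Finset.mul_sum, ← Finset.sum_add_distrib]
    rw [this]
    have hsum1 : (1 + α) * Real.log Z = ∑ x, (1 + α) * Real.log Z * V x := by
      rw [← Finset.mul_sum, hV.2, mul_one]
    rw [hsum1, Finset.mul_sum, ← Finset.sum_sub_distrib]
    apply Finset.sum_congr rfl
    intro x _
    rcases eq_or_lt_of_le (hV.1 x) with hv | hv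
    · simp [← hv]
    · rw [Real.log_div hv.ne' (hPpos x).ne', Real.log_div hv.ne' (hQpos x).ne',
        Real.log_div hv.ne' (hWpos x).ne', hlogW x]
      linear_combination (V x * Real.log (P x)) * hb1 + (V x * Real.log (Q x)) * hb2
  -- KL-type nonnegativity
  have Snonneg : ∀ V : X → ℝ, IsProb V → 0 ≤ ∑ x, V x * Real.log (V x / W x) := by
    intro V hV
    have hflip : ∀ x : X, V x * Real.log (V x / W x) = -(V x * Real.log (W x / V x)) := by
      intro x
      rw [← inv_div (W x) (V x), Real.log_inv]
      ring
    have hle : ∀ x : X, V x * Real.log (W x / V x) ≤ W x - V x := by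
      intro x
      rcases eq_or_lt_of_le (hV.1 x) with hv | hv
      · rw [← hv]; simp [(hWpos x).le]
      · have h1 : Real.log (W x / V x) ≤ W x / V x - 1 :=
          Real.log_le_sub_one_of_pos (div_pos (hWpos x) hv)
        have h2 : V x * Real.log (W x / V x) ≤ V x * (W x / V x - 1) :=
          mul_le_mul_of_nonneg_left h1 hv.le
        calc V x * Real.log (W x / V x) ≤ V x * (W x / V x - 1) := h2
          _ = W x - V x := by field_simp
    have hsum : ∑ x, V x * Real.log (W x / V x) ≤ 0 := by
      calc ∑ x, V x * Real.log (W x / V x) ≤ ∑ x, (W x - V x) :=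
            Finset.sum_le_sum (fun x _ => hle x)
        _ = 0 := by rw [Finset.sum_sub_distrib, hWsum, hV.2]; ring
    have heq : ∑ x, V x * Real.log (V x / W x) = -∑ x, V x * Real.log (W x / V x) := by
      rw [← Finset.sum_neg_distrib]
      exact Finset.sum_congr rfl fun x _ => hflip x
    linarith
  have hRenyi : Renyi β P Q = -(1 + α) * Real.log Z := by
    rw [Renyi, ← hZdef]
    have hβ1 : β - 1 = -(1 / (1 + α)) := by rw [hβdef]; field_simp; ring
    rw [hβ1]
    field_simp
  constructor
  · refine ⟨W, ⟨fun x => (hWpos x).le, hWsum⟩, ?_⟩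
    have hKWW : ∑ x, W x * Real.log (W x / W x) = 0 := by
      apply Finset.sum_eq_zero
      intro x _
      rw [div_self (hWpos x).ne', Real.log_one, mul_zero]
    rw [key W ⟨fun x => (hWpos x).le, hWsum⟩, hKWW, hRenyi]
    ring
  · rintro v ⟨V, hV, rfl⟩
    rw [key V hV, hRenyi]
    nlinarith [Snonneg V hV, h1α]
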